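/- Under injection of k copies each of ≻_odd and ≻_even into a profile P of n agents, no issue b ≠ a can have divisiveness tending to 1: for every b ≠ a, the rank of b differs by at most 1 between ≻_odd and ≻_even, and consequently limsup_{k→∞} Div_0^Borda(b, P'_k) ≤ 1/(m−1) + o(1) contribution from original agents, in particular lim_{k→∞} Div_0^Borda(b, P'_k) < 1 whenever m ≥ 3. -/

import Mathlib

open Finset

/-- The sub-population of agents preferring issue `a` to issue `b`
(ranking `p i : I ≃ Fin m` gives 0-based positions, lower = more preferred). -/
def subpop {I A : Type*} [Fintype A] {m : ℕ}
    (p : A → I ≃ Fin m) (a b : I) : Finset A :=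
  Finset.univ.filter fun i => p i a < p i b

/-- Restriction of a profile to a sub-population, as a multiset of rankings. -/
def restr {I A : Type*} {m : ℕ} (p : A → I ≃ Fin m) (X : Finset A) :
    Multiset (I ≃ Fin m) :=
  X.val.map p

/-- Normalised Borda score of issue `a` in a (sub)profile `Q` over `m` issues. -/
noncomputable def bordaM {I : Type*} {m : ℕ}
    (Q : Multiset (I ≃ Fin m)) (a : I) : ℝ :=
  (Q.map fun r => (m : ℝ) - 1 - ((r a : ℕ) : ℝ)).sum /
    ((Multiset.card Q : ℝ) * ((m : ℝ) - 1))

/-- Normalised Copeland score of issue `a` in a (sub)profile `Q` over `m` issues. -/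
noncomputable def copM {I : Type*} [Fintype I] [DecidableEq I] {m : ℕ}
    (Q : Multiset (I ≃ Fin m)) (a : I) : ℝ :=
  ((Finset.univ.filter fun b =>
      b ≠ a ∧ Q.countP (fun r => r b < r a) < Q.countP (fun r => r a < r b)).card : ℝ) /
    ((m : ℝ) - 1)

/-- α-divisiveness of issue `a` w.r.t. scoring function `s`, normalising constant `ℓ`.
A summand is `0` whenever one of the two sub-populations is empty. -/
noncomputable def alphaDiv {I A : Type*} [Fintype I] [DecidableEq I] [Fintype A]
    {m : ℕ} (p : A → I ≃ Fin m) (s : Multiset (I ≃ Fin m) → I → ℝ)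
    (α ℓ : ℝ) (a : I) : ℝ :=
  (1 / ((m : ℝ) - 1)) *
    ∑ b ∈ Finset.univ.erase a,
      if 0 < (subpop p a b).card ∧ 0 < (subpop p b a).card then
        (ℓ * ((subpop p a b).card : ℝ) * ((subpop p b a).card : ℝ) /
            ((Fintype.card A : ℝ)) ^ 2) ^ α *
          |s (restr p (subpop p a b)) a - s (restr p (subpop p b a)) a|
      else 0

/-- The profile obtained from `p` by injecting `k` fresh agents with ranking `rodd`
and `k` fresh agents with ranking `reven`. -/
def inj {I : Type*} {n m : ℕ} (p : Fin n → I ≃ Fin m)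
    (rodd reven : I ≃ Fin m) (k : ℕ) :
    (Fin n ⊕ (Fin k ⊕ Fin k)) → I ≃ Fin m :=
  Sum.elim p (Sum.elim (fun _ => rodd) (fun _ => reven))

lemma rank_eq_card {I : Type*} [Fintype I] [DecidableEq I] {m : ℕ}
    (r : I ≃ Fin m) (b : I) :
    (Finset.univ.filter fun c => r c < r b).card = (r b : ℕ) := by
  have himg : (Finset.univ.filter fun c => r c < r b).image r = Finset.Iio (r b) := by
    ext j
    simp only [Finset.mem_image, Finset.mem_filter, Finset.mem_univ, true_and, Finset.mem_Iio]
    constructor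
    · rintro ⟨c, hc, rfl⟩; exact hc
    · intro hj; exact ⟨r.symm j, by simpa using hj, by simp⟩
  rw [← Fin.card_Iio (r b), ← himg, Finset.card_image_of_injective _ r.injective]

lemma bordaM_restr {I A : Type*} {m : ℕ} (p : A → I ≃ Fin m) (X : Finset A) (b : I) :
    bordaM (restr p X) b =
      (∑ i ∈ X, ((m : ℝ) - 1 - ((p i b : ℕ) : ℝ))) / ((X.card : ℝ) * ((m : ℝ) - 1)) := by
  simp only [bordaM, restr, Multiset.map_map, Multiset.card_map]
  rfl

lemma term_bounds {I : Type*} {m : ℕ} (r : I ≃ Fin m) (b : I) :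
    0 ≤ (m : ℝ) - 1 - ((r b : ℕ) : ℝ) ∧ (m : ℝ) - 1 - ((r b : ℕ) : ℝ) ≤ (m : ℝ) - 1 := by
  have h1 : ((r b : ℕ) : ℝ) + 1 ≤ (m : ℝ) := by exact_mod_cast (r b).isLt
  have h2 : (0:ℝ) ≤ ((r b : ℕ) : ℝ) := Nat.cast_nonneg _
  constructor <;> linarith

lemma bordaM_restr_mem {I A : Type*} {m : ℕ} (hm : (0:ℝ) < (m:ℝ) - 1)
    (p : A → I ≃ Fin m) (X : Finset A) (b : I) (hX : 0 < X.card) :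
    0 ≤ bordaM (restr p X) b ∧ bordaM (restr p X) b ≤ 1 := by
  rw [bordaM_restr]
  have hXr : (0:ℝ) < (X.card : ℝ) := by exact_mod_cast hX
  have hden : (0:ℝ) < (X.card : ℝ) * ((m:ℝ) - 1) := by positivity
  have hnum0 : 0 ≤ ∑ i ∈ X, ((m : ℝ) - 1 - ((p i b : ℕ) : ℝ)) :=
    Finset.sum_nonneg fun i _ => (term_bounds (p i) b).1
  have hnum1 : ∑ i ∈ X, ((m : ℝ) - 1 - ((p i b : ℕ) : ℝ)) ≤ (X.card : ℝ) * ((m:ℝ) - 1) := by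
    calc ∑ i ∈ X, ((m : ℝ) - 1 - ((p i b : ℕ) : ℝ)) ≤ X.card • ((m:ℝ) - 1) :=
          Finset.sum_le_card_nsmul _ _ _ fun i _ => (term_bounds (p i) b).2
      _ = (X.card : ℝ) * ((m:ℝ) - 1) := nsmul_eq_mul _ _
  exact ⟨div_nonneg hnum0 hden.le, (div_le_one hden).2 hnum1⟩

lemma sum_subpop_inj {I : Type*} [Fintype I] [DecidableEq I] {n m : ℕ}
    (p : Fin n → I ≃ Fin m) (rodd reven : I ≃ Fin m) (k : ℕ)
    (x y : I) (f : (I ≃ Fin m) → ℝ) :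
    ∑ i ∈ subpop (inj p rodd reven k) x y, f (inj p rodd reven k i)
      = (∑ i ∈ subpop p x y, f (p i))
        + (if rodd x < rodd y then (k : ℝ) * f rodd else 0)
        + (if reven x < reven y then (k : ℝ) * f reven else 0) := by
  simp only [subpop, Finset.sum_filter]
  simp only [inj]
  rw [Fintype.sum_sum_type, Fintype.sum_sum_type]
  by_cases h1 : rodd x < rodd y <;> by_cases h2 : reven x < reven y <;>
    simp [h1, h2, Finset.sum_const, Finset.card_univ, mul_comm, add_assoc] <;> rfl

lemma mixture_bound {t k M S v : ℝ} (ht : 0 ≤ t) (hk : 0 < k) (hM : 0 < M)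
    (hS0 : 0 ≤ S) (hS1 : S ≤ t * M) (hv0 : 0 ≤ v) (hv1 : v ≤ M) :
    |(S + k * v) / ((t + k) * M) - v / M| ≤ t / k := by
  have hden : 0 < (t + k) * M := by positivity
  have heq : (S + k * v) / ((t + k) * M) - v / M = (S - t * v) / ((t + k) * M) := by
    field_simp; ring
  rw [heq, abs_div, abs_of_pos hden, div_le_div_iff₀ hden hk]
  have habs : |S - t * v| ≤ t * M := by
    rw [abs_le]; constructor <;> nlinarith
  nlinarith [mul_le_mul_of_nonneg_right habs hk.le]


/-- under injection of `k` copies each of `rodd` (`a` first) and `reven`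
(`a` last, same order of the other issues), for any `b ≠ a` the rank of `b` differs by
at most `1` between `rodd` and `reven`, and the 0-divisiveness of `b` under Borda does
not tend to `1`: its limsup as `k → ∞` is `< 1` (for `m ≥ 3`). -/
theorem stmt15 {I : Type*} [Fintype I] [DecidableEq I] {m n : ℕ}
    (hm : 3 ≤ m) (hcard : Fintype.card I = m)
    (p : Fin n → I ≃ Fin m) (a : I)
    (base rodd reven : I ≃ Fin m)
    (hodda : (rodd a : ℕ) = 0) (hevena : (reven a : ℕ) = m - 1)
    (hodd : ∀ x y : I, x ≠ a → y ≠ a → (rodd x < rodd y ↔ base x < base y))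
    (heven : ∀ x y : I, x ≠ a → y ≠ a → (reven x < reven y ↔ base x < base y))
    (b : I) (hb : b ≠ a) :
    |((rodd b : ℕ) : ℤ) - ((reven b : ℕ) : ℤ)| ≤ 1 ∧
    Filter.limsup (fun k : ℕ => alphaDiv (inj p rodd reven k) bordaM 0 4 b)
      Filter.atTop < 1 := by
  have hM0 : (0:ℝ) < (m:ℝ) - 1 := by
    have : (3:ℝ) ≤ (m:ℝ) := by exact_mod_cast hm
    linarith
  have hM2 : (2:ℝ) ≤ (m:ℝ) - 1 := by
    have : (3:ℝ) ≤ (m:ℝ) := by exact_mod_cast hm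
    linarith
  set M : ℝ := (m:ℝ) - 1 with hMdef
  -- Part 1
  have hob : rodd b ≠ rodd a := fun h => hb (rodd.injective h)
  have hoab : rodd a < rodd b := by
    rw [Fin.lt_def, hodda]
    exact Nat.pos_of_ne_zero fun h => hob (Fin.ext (by rw [h, hodda]))
  have heb : reven b ≠ reven a := fun h => hb (reven.injective h)
  have hevb : (reven b : ℕ) < m - 1 := by
    have h1 := (reven b).isLt
    have h2 : (reven b : ℕ) ≠ m - 1 := fun h => heb (Fin.ext (by rw [h, hevena]))
    omega
  have heba : reven b < reven a := by rw [Fin.lt_def, hevena]; exact hevb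
  have hsets_odd : (Finset.univ.filter fun c => rodd c < rodd b)
      = insert a (Finset.univ.filter fun c => c ≠ a ∧ base c < base b) := by
    ext c
    simp only [Finset.mem_filter, Finset.mem_univ, true_and, Finset.mem_insert]
    by_cases hc : c = a
    · subst hc; simp [hoab]
    · simp [hc, hodd c b hc hb]
  have hsets_even : (Finset.univ.filter fun c => reven c < reven b)
      = Finset.univ.filter fun c => c ≠ a ∧ base c < base b := by
    ext c
    simp only [Finset.mem_filter, Finset.mem_univ, true_and]
    by_cases hc : c = a
    · subst hc; simp [lt_asymm heba]
    · simp [hc, heven c b hc hb]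
  have hanotin : a ∉ (Finset.univ.filter fun c => c ≠ a ∧ base c < base b) := by simp
  have hro : (rodd b : ℕ)
      = (Finset.univ.filter fun c => c ≠ a ∧ base c < base b).card + 1 := by
    rw [← rank_eq_card rodd b, hsets_odd, Finset.card_insert_of_notMem hanotin]
  have hre : (reven b : ℕ)
      = (Finset.univ.filter fun c => c ≠ a ∧ base c < base b).card := by
    rw [← rank_eq_card reven b, hsets_even]
  have hkey : (rodd b : ℕ) = (reven b : ℕ) + 1 := by rw [hro, hre]
  constructor
  · rw [hkey]; push_cast; norm_num
  -- Part 2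
  set g : (I ≃ Fin m) → ℝ := fun r => (m:ℝ) - 1 - ((r b : ℕ) : ℝ) with hg
  -- rewrite alphaDiv at α = 0
  have hADeq : ∀ k : ℕ, alphaDiv (inj p rodd reven k) bordaM 0 4 b
      = (1/M) * ∑ c ∈ Finset.univ.erase b,
          (if 0 < (subpop (inj p rodd reven k) b c).card
              ∧ 0 < (subpop (inj p rodd reven k) c b).card then
            |bordaM (restr (inj p rodd reven k) (subpop (inj p rodd reven k) b c)) b
              - bordaM (restr (inj p rodd reven k) (subpop (inj p rodd reven k) c b)) b|
          else 0) := by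
    intro k
    simp only [alphaDiv, Real.rpow_zero, one_mul, hMdef]
  have hnn : ∀ k : ℕ, 0 ≤ alphaDiv (inj p rodd reven k) bordaM 0 4 b := by
    intro k
    rw [hADeq k]
    refine mul_nonneg (by positivity) (Finset.sum_nonneg fun c _ => ?_)
    split
    · exact abs_nonneg _
    · exact le_rfl
  set T : ℝ := (1/M) * ((M - 1) + (1/M + 1/4)) with hT
  have hTlt : T < 1 := by
    have h1M : M⁻¹ ≤ 1/2 := by
      rw [← one_div, div_le_div_iff₀ hM0 (by norm_num)]; linarith
    rw [hT, one_div, inv_mul_eq_div, div_lt_one hM0]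
    linarith
  have hev : ∀ k : ℕ, 8*n + 8 ≤ k → alphaDiv (inj p rodd reven k) bordaM 0 4 b ≤ T := by
    intro k hk
    have hk8 : 8*(n:ℝ) + 8 ≤ (k:ℝ) := by exact_mod_cast hk
    have hk0 : (0:ℝ) < (k:ℝ) := by
      have : (0:ℝ) ≤ (n:ℝ) := Nat.cast_nonneg n
      linarith
    have hnk : (n:ℝ)/(k:ℝ) ≤ 1/8 := by
      rw [div_le_div_iff₀ hk0 (by norm_num)]
      have : (0:ℝ) ≤ (n:ℝ) := Nat.cast_nonneg n
      linarith
    set q := inj p rodd reven k with hq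
    set t : ℝ := ((subpop p b a).card : ℝ) with hts
    set u : ℝ := ((subpop p a b).card : ℝ) with hus
    set St : ℝ := ∑ i ∈ subpop p b a, g (p i) with hSt
    set Su : ℝ := ∑ i ∈ subpop p a b, g (p i) with hSu
    have ht0 : 0 ≤ t := Nat.cast_nonneg _
    have hu0 : 0 ≤ u := Nat.cast_nonneg _
    have htn : t ≤ (n:ℝ) := by
      rw [hts]
      exact_mod_cast (Finset.card_filter_le _ _).trans_eq (by simp)
    have hun : u ≤ (n:ℝ) := by
      rw [hus]
      exact_mod_cast (Finset.card_filter_le _ _).trans_eq (by simp)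
    have hSt0 : 0 ≤ St := Finset.sum_nonneg fun i _ => (term_bounds (p i) b).1
    have hSt1 : St ≤ t * M := by
      calc St ≤ (subpop p b a).card • M :=
            Finset.sum_le_card_nsmul _ _ _ fun i _ => (term_bounds (p i) b).2
        _ = t * M := nsmul_eq_mul _ _
    have hSu0 : 0 ≤ Su := Finset.sum_nonneg fun i _ => (term_bounds (p i) b).1
    have hSu1 : Su ≤ u * M := by
      calc Su ≤ (subpop p a b).card • M :=
            Finset.sum_le_card_nsmul _ _ _ fun i _ => (term_bounds (p i) b).2
        _ = u * M := nsmul_eq_mul _ _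
    have hgo := term_bounds rodd b
    have hge := term_bounds reven b
    -- subpop q b a
    have hXsum : ∑ i ∈ subpop q b a, g (q i) = St + (k:ℝ) * g reven := by
      have h := sum_subpop_inj p rodd reven k b a g
      rw [if_neg (asymm hoab), if_pos heba, add_zero] at h
      exact h
    have hXcard : ((subpop q b a).card : ℝ) = t + (k:ℝ) := by
      have h := sum_subpop_inj p rodd reven k b a (fun _ => (1:ℝ))
      rw [if_neg (asymm hoab), if_pos heba, add_zero] at h
      simp only [Finset.sum_const, nsmul_eq_mul, mul_one] at h
      exact h
    have hYsum : ∑ i ∈ subpop q a b, g (q i) = Su + (k:ℝ) * g rodd := by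
      have h := sum_subpop_inj p rodd reven k a b g
      rw [if_pos hoab, if_neg (asymm heba), add_zero] at h
      exact h
    have hYcard : ((subpop q a b).card : ℝ) = u + (k:ℝ) := by
      have h := sum_subpop_inj p rodd reven k a b (fun _ => (1:ℝ))
      rw [if_pos hoab, if_neg (asymm heba), add_zero] at h
      simp only [Finset.sum_const, nsmul_eq_mul, mul_one] at h
      exact h
    have hBX : bordaM (restr q (subpop q b a)) b = (St + (k:ℝ) * g reven) / ((t + k) * M) := by
      rw [bordaM_restr, hXcard, ← hXsum]
    have hBY : bordaM (restr q (subpop q a b)) b = (Su + (k:ℝ) * g rodd) / ((u + k) * M) := by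
      rw [bordaM_restr, hYcard, ← hYsum]
    have hBX' : |bordaM (restr q (subpop q b a)) b - g reven / M| ≤ (n:ℝ)/k := by
      rw [hBX]
      refine (mixture_bound ht0 hk0 hM0 hSt0 hSt1 hge.1 hge.2).trans ?_
      gcongr
    have hBY' : |bordaM (restr q (subpop q a b)) b - g rodd / M| ≤ (n:ℝ)/k := by
      rw [hBY]
      refine (mixture_bound hu0 hk0 hM0 hSu0 hSu1 hgo.1 hgo.2).trans ?_
      gcongr
    have hc1 : ((rodd b : ℕ):ℝ) = ((reven b : ℕ):ℝ) + 1 := by exact_mod_cast hkey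
    have hcen : |g reven / M - g rodd / M| = 1/M := by
      have hgg : g reven / M - g rodd / M = 1/M := by
        rw [div_sub_div_same]
        congr 1
        simp only [hg]
        linarith [hc1]
      rw [hgg, abs_of_pos (by positivity)]
    -- summand at c = a
    have hsa : |bordaM (restr q (subpop q b a)) b - bordaM (restr q (subpop q a b)) b|
        ≤ 1/M + 1/4 := by
      have t1 := abs_sub_le (bordaM (restr q (subpop q b a)) b) (g reven / M)
        (bordaM (restr q (subpop q a b)) b)
      have t2 := abs_sub_le (g reven / M) (g rodd / M) (bordaM (restr q (subpop q a b)) b)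
      have t3 : |g rodd / M - bordaM (restr q (subpop q a b)) b| ≤ (n:ℝ)/k := by
        rw [abs_sub_comm]; exact hBY'
      have : (n:ℝ)/k + (n:ℝ)/k ≤ 1/4 := by linarith
      linarith [hcen, hBX', t1, t2, t3]
    -- total bound
    rw [hADeq k]
    have hmem : a ∈ Finset.univ.erase b :=
      Finset.mem_erase.2 ⟨fun h => hb h.symm, Finset.mem_univ a⟩
    rw [hT]
    refine mul_le_mul_of_nonneg_left ?_ (by positivity)
    rw [← Finset.add_sum_erase _ _ hmem, add_comm (M - 1)]
    refine add_le_add ?_ ?_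
    · -- the a-summand
      split
      · exact hsa
      · positivity
    · -- the other summands
      have hper : ∀ c ∈ (Finset.univ.erase b).erase a,
          (if 0 < (subpop q b c).card ∧ 0 < (subpop q c b).card then
            |bordaM (restr q (subpop q b c)) b - bordaM (restr q (subpop q c b)) b|
          else 0) ≤ 1 := by
        intro c _
        split
        next h =>
          obtain ⟨h1, h2⟩ := h
          obtain ⟨a1, a2⟩ := bordaM_restr_mem hM0 q (subpop q b c) b h1
          obtain ⟨b1, b2⟩ := bordaM_restr_mem hM0 q (subpop q c b) b h2
          rw [abs_sub_le_iff]
          constructor <;> linarith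
        next => norm_num
      have hcard2 : ((Finset.univ.erase b).erase a).card = m - 2 := by
        rw [Finset.card_erase_of_mem hmem, Finset.card_erase_of_mem (Finset.mem_univ b),
          Finset.card_univ, hcard]
        omega
      calc ∑ c ∈ (Finset.univ.erase b).erase a, _ ≤ ((Finset.univ.erase b).erase a).card • (1:ℝ) :=
            Finset.sum_le_card_nsmul _ _ _ hper
        _ = ((m - 2 : ℕ) : ℝ) := by rw [hcard2]; simp
        _ = M - 1 := by
            rw [Nat.cast_sub (by omega), hMdef]; push_cast; ring
  -- conclude
  refine lt_of_le_of_lt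
    (Filter.limsup_le_of_le (Filter.isCoboundedUnder_le_of_le Filter.atTop hnn)
      (Filter.eventually_atTop.2 ⟨8*n + 8, hev⟩)) hTlt
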